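/- arXiv:1201.6529 — 4 statements merged into one kernel-verified Lean document; each statement's English description precedes it below -/
import Mathlib

section
/- In the Depth First Search exploration of a graph G, at every step of the algorithm there are no edges of G between the current set S of fully explored vertices and the current set T of unvisited vertices. -/
open Filter

/-- One step of the Depth First Search exploration of a graph `G`.  A state is a pair
`(S, U)` where `S` is the set of fully explored vertices and `U` is the stack of
vertices currently being explored (head = top of stack); the unvisited set is
`T = V ∖ (S ∪ U)`. -/
inductive DFSStep {V : Type*} [DecidableEq V] (G : SimpleGraph V) :
    Finset V × List V → Finset V × List V → Prop
  /-- The top vertex `v` of the stack has a neighbor `u` in `T`: push `u`. -/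
  | push (S : Finset V) (v : V) (U : List V) (u : V) (hadj : G.Adj v u)
      (hS : u ∉ S) (hU : u ∉ v :: U) : DFSStep G (S, v :: U) (S, u :: v :: U)
  /-- The top vertex `v` has no neighbor in `T`: pop `v` into `S`. -/
  | pop (S : Finset V) (v : V) (U : List V)
      (h : ∀ u : V, u ∉ S → u ∉ v :: U → ¬ G.Adj v u) :
      DFSStep G (S, v :: U) (insert v S, U)
  /-- The stack is empty: push an arbitrary unvisited vertex. -/
  | start (S : Finset V) (u : V) (hS : u ∉ S) : DFSStep G (S, []) (S, [u])

/-- The states reachable by the DFS exploration of `G` from the initial state. -/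
def DFSReachable {V : Type*} [DecidableEq V] (G : SimpleGraph V)
    (st : Finset V × List V) : Prop :=
  Relation.ReflTransGen (DFSStep G) (∅, ([] : List V)) st

/-- At every step of the DFS exploration, there are no edges of `G` between the set
`S` of fully explored vertices and the set `T` of unvisited vertices. -/
theorem stmt_8 {V : Type*} [DecidableEq V] (G : SimpleGraph V)
    (st : Finset V × List V) (h : DFSReachable G st) :
    ∀ s ∈ st.1, ∀ t : V, t ∉ st.1 → t ∉ st.2 → ¬ G.Adj s t := by
  induction h with
  | refl => simp
  | tail _ hstep ih =>
    cases hstep with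
    | push S v U u hadj hS hU =>
      intro s hs t ht htU
      exact ih s hs t ht (fun h => htU (List.mem_cons_of_mem _ h))
    | pop S v U hpop =>
      intro s hs t ht htU
      simp only [Finset.mem_insert] at hs ht
      push_neg at ht
      rcases hs with rfl | hs
      · exact hpop t ht.2 (by simp [ht.1, htU])
      · exact ih s hs t ht.2 (by simp [ht.1, htU])
    | start S u hS =>
      intro s hs t ht htU
      exact ih s hs t ht (by simp)
end

section
/- Run DFS on a graph determined by a sequence X_1, X_2, ..., X_N ∈ {0,1} answering the algorithm's edge queries in order (X_i = 1 meaning the i-th queried pair is an edge). Then after t queries, as long as the set T of unvisited vertices is nonempty, |S ∪ U| ≥ ∑_{i=1}^t X_i, and at any time |U| ≤ 1 + ∑_{i=1}^t X_i. -/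
open Filter

/-- One step of a DFS exploration guided by a sequence `X` of query answers.
A state is `(S, U, t)`: explored set, stack, and the number of queries made so far.
The `i`-th query is answered positively iff `X i = true`; while the unvisited set
is nonempty, a positive answer moves a vertex from `T` to the stack `U`. -/
inductive DFSQStep {V : Type*} [DecidableEq V] (X : ℕ → Bool) :
    Finset V × List V × ℕ → Finset V × List V × ℕ → Prop
  /-- A positively answered query reveals a new vertex `u`, pushed onto the stack. -/
  | pos (S : Finset V) (v : V) (U : List V) (u : V) (t : ℕ) (hX : X t = true)
      (hS : u ∉ S) (hU : u ∉ v :: U) :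
      DFSQStep X (S, v :: U, t) (S, u :: v :: U, t + 1)
  /-- A negatively answered query changes nothing but the query count. -/
  | neg (S : Finset V) (v : V) (U : List V) (t : ℕ) (hX : X t = false) :
      DFSQStep X (S, v :: U, t) (S, v :: U, t + 1)
  /-- The top of the stack is popped into `S` (no query is made). -/
  | pop (S : Finset V) (v : V) (U : List V) (t : ℕ) :
      DFSQStep X (S, v :: U, t) (insert v S, U, t)
  /-- The stack is empty: an unvisited vertex is pushed "for free". -/
  | start (S : Finset V) (u : V) (t : ℕ) (hS : u ∉ S) :
      DFSQStep X (S, [], t) (S, [u], t)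

/-- States reachable by the query-guided DFS from the initial state (no queries made). -/
def DFSQReachable {V : Type*} [DecidableEq V] (X : ℕ → Bool)
    (st : Finset V × List V × ℕ) : Prop :=
  Relation.ReflTransGen (DFSQStep X) (∅, ([] : List V), 0) st

lemma dfsq_aux {V : Type*} [DecidableEq V] (X : ℕ → Bool)
    (st : Finset V × List V × ℕ) (h : DFSQReachable X st) :
    (∑ i ∈ Finset.range st.2.2, (if X i = true then 1 else 0)) ≤
        (st.1 ∪ st.2.1.toFinset).card ∧
      st.2.1.length ≤ 1 + ∑ i ∈ Finset.range st.2.2, (if X i = true then 1 else 0) := by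
  induction h with
  | refl => simp
  | tail _ step ih =>
    obtain ⟨ih1, ih2⟩ := ih
    cases step with
    | pos S v U u t hX hS hU =>
      simp only [Finset.sum_range_succ, hX, if_true] at *
      constructor
      · have hnot : u ∉ S ∪ (v :: U).toFinset := by
          simp only [Finset.mem_union, List.mem_toFinset]
          tauto
        have : (S ∪ (u :: v :: U).toFinset).card =
            (S ∪ (v :: U).toFinset).card + 1 := by
          rw [List.toFinset_cons, Finset.union_insert,
            Finset.card_insert_of_notMem hnot]
        omega
      · simp only [List.length_cons] at *
        omega
    | neg S v U t hX =>
      simp only [Finset.sum_range_succ, hX] at *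
      simp only [Bool.false_eq_true, if_false, add_zero]
      exact ⟨ih1, ih2⟩
    | pop S v U t =>
      dsimp only at ih1 ih2 ⊢
      constructor
      · refine ih1.trans (Finset.card_le_card ?_)
        intro x hx
        simp only [Finset.mem_union, Finset.mem_insert, List.mem_toFinset,
          List.mem_cons] at *
        tauto
      · simp only [List.length_cons] at ih2
        omega
    | start S u t hS =>
      constructor
      · refine ih1.trans (Finset.card_le_card ?_)
        intro x hx
        simp only [Finset.mem_union, List.mem_toFinset] at *
        tauto
      · simp only [List.length_cons, List.length_nil]; exact Nat.le_add_right 1 _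

/-- In a DFS guided by query answers `X`, after `t` queries: as long as the unvisited
set `T` is nonempty we have `|S ∪ U| ≥ ∑_{i<t} X_i`, and always `|U| ≤ 1 + ∑_{i<t} X_i`. -/
theorem stmt_9 {V : Type*} [DecidableEq V] (X : ℕ → Bool)
    (S : Finset V) (U : List V) (t : ℕ) (h : DFSQReachable X (S, U, t)) :
    ((∃ w : V, w ∉ S ∧ w ∉ U) →
      (∑ i ∈ Finset.range t, (if X i = true then 1 else 0)) ≤ (S ∪ U.toFinset).card) ∧
    U.length ≤ 1 + ∑ i ∈ Finset.range t, (if X i = true then 1 else 0) := by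
  exact ⟨fun _ => (dfsq_aux X (S,U,t) h).1, (dfsq_aux X (S,U,t) h).2⟩
end

section
/- Let G be a graph on n vertices such that for every pair of disjoint vertex subsets A, B of size k each, there is at least one edge of G between A and B. Then G contains a path with n − 2k + 2 vertices (i.e., of length n − 2k + 1). -/
open Finset

/-- Helper: if `F` has fewer than `k` elements, `W` has at least `k` elements,
there are no `G`-edges between `F ∪ {v}` and `W`, then `insert v F` still has
fewer than `k` elements (otherwise the hypothesis `h` is violated). -/
lemma stmt_15_grow {V : Type*} [Fintype V] [DecidableEq V] {G : SimpleGraph V} {k : ℕ}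
    (h : ∀ A B : Finset V, A.card = k → B.card = k → Disjoint A B →
      ∃ a ∈ A, ∃ b ∈ B, G.Adj a b)
    {F W : Finset V} {v : V}
    (hFW : ∀ f ∈ F, ∀ w ∈ W, ¬ G.Adj f w)
    (hv : ∀ w ∈ W, ¬ G.Adj v w)
    (hvF : v ∉ F) (hvW : v ∉ W) (hdisj : Disjoint F W)
    (hF : F.card < k) (hW : k ≤ W.card) :
    (insert v F).card < k := by
  by_contra hc
  push_neg at hc
  rw [Finset.card_insert_of_notMem hvF] at hc
  have hA : (insert v F).card = k := by
    rw [Finset.card_insert_of_notMem hvF]; omega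
  obtain ⟨B, hBW, hB⟩ := Finset.exists_subset_card_eq hW
  have hABdisj : Disjoint (insert v F) B := by
    apply Finset.disjoint_left.2
    intro a ha haB
    rcases Finset.mem_insert.1 ha with rfl | haF
    · exact hvW (hBW haB)
    · exact (Finset.disjoint_left.1 hdisj haF) (hBW haB)
  obtain ⟨a, haA, b, hbB, hadj⟩ := h (insert v F) B hA hB hABdisj
  rcases Finset.mem_insert.1 haA with rfl | haF
  · exact hv b (hBW hbB) hadj
  · exact hFW a haF b (hBW hbB) hadj

/-- Stop lemma: cardinality bookkeeping giving the length bound. -/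
lemma stmt_15_stop {V : Type*} [Fintype V] [DecidableEq V] {G : SimpleGraph V}
    {n k : ℕ} (hn : Fintype.card V = n) (h2k : 2 * k ≤ n)
    {W : Finset V} {v u : V} {p : G.Walk v u} (hp : p.IsPath)
    (hx : ∀ x ∈ W, x ∉ p.support)
    (hW : W.card < k)
    (hF : ((Finset.univ \ W) \ p.support.toFinset).card < k) :
    n - 2 * k + 1 ≤ p.length := by
  have hS : p.support.toFinset.card = p.length + 1 := by
    rw [List.toFinset_card_of_nodup hp.support_nodup, SimpleGraph.Walk.length_support]
  have hWS : Disjoint W p.support.toFinset :=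
    Finset.disjoint_left.2 fun a haW haS => hx a haW (List.mem_toFinset.1 haS)
  have hUnion : (W ∪ p.support.toFinset).card = W.card + p.support.toFinset.card :=
    Finset.card_union_of_disjoint hWS
  have hsub : W ∪ p.support.toFinset ⊆ Finset.univ := Finset.subset_univ _
  have hle : (W ∪ p.support.toFinset).card ≤ n := by
    rw [← hn, ← Finset.card_univ]; exact Finset.card_le_card hsub
  have hFcard : ((Finset.univ \ W) \ p.support.toFinset).card
      = n - (W ∪ p.support.toFinset).card := by
    rw [sdiff_sdiff, sup_eq_union, Finset.card_sdiff_of_subset hsub, Finset.card_univ, hn]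
  omega

/-- DFS simulation lemma. -/
lemma stmt_15_dfs {V : Type*} [Fintype V] [DecidableEq V] (G : SimpleGraph V)
    (n k : ℕ) (hn : Fintype.card V = n) (hk : 0 < k) (h2k : 2 * k ≤ n)
    (h : ∀ A B : Finset V, A.card = k → B.card = k → Disjoint A B →
      ∃ a ∈ A, ∃ b ∈ B, G.Adj a b) :
    ∀ (m : ℕ) (W : Finset V) (v u : V) (p : G.Walk v u),
      2 * W.card + p.length ≤ m → p.IsPath →
      (∀ x ∈ W, x ∉ p.support) →
      (∀ f, f ∉ W → f ∉ p.support → ∀ w ∈ W, ¬ G.Adj f w) →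
      ((Finset.univ \ W) \ p.support.toFinset).card < k →
      ∃ (v' u' : V) (q : G.Walk v' u'), q.IsPath ∧ n - 2 * k + 1 ≤ q.length := by
  intro m
  induction m with
  | zero =>
    intro W v u p hm hp hx hinv hF
    have hW : W.card < k := by omega
    exact ⟨v, u, p, hp, stmt_15_stop hn h2k hp hx hW hF⟩
  | succ m ih =>
    intro W v u p hm hp hx hinv hF
    by_cases hWk : W.card < k
    · exact ⟨v, u, p, hp, stmt_15_stop hn h2k hp hx hWk hF⟩
    push_neg at hWk
    have hWpos : 0 < W.card := lt_of_lt_of_le hk hWk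
    by_cases hnb : ∃ x ∈ W, G.Adj x v
    · -- push
      obtain ⟨x, hxW, hadj⟩ := hnb
      have hxs : x ∉ p.support := hx x hxW
      have hset : (Finset.univ \ W.erase x) \ (SimpleGraph.Walk.cons hadj p).support.toFinset
          = (Finset.univ \ W) \ p.support.toFinset := by
        ext a
        simp only [SimpleGraph.Walk.support_cons, List.toFinset_cons, Finset.mem_sdiff,
          Finset.mem_univ, Finset.mem_erase, Finset.mem_insert, true_and, not_or]
        constructor
        · rintro ⟨h1, h2, h3⟩
          exact ⟨fun haW => h1 ⟨h2, haW⟩, h3⟩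
        · rintro ⟨h1, h2⟩
          have hax : a ≠ x := fun he => h1 (he ▸ hxW)
          exact ⟨fun hc => h1 hc.2, hax, h2⟩
      apply ih (W.erase x) x u (SimpleGraph.Walk.cons hadj p)
      · rw [Finset.card_erase_of_mem hxW, SimpleGraph.Walk.length_cons]
        omega
      · exact (SimpleGraph.Walk.cons_isPath_iff _ _).2 ⟨hp, hxs⟩
      · intro y hy
        rw [SimpleGraph.Walk.support_cons, List.mem_cons]
        push_neg
        exact ⟨Finset.ne_of_mem_erase hy, hx y (Finset.mem_of_mem_erase hy)⟩
      · intro f hfW hfs w hw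
        rw [SimpleGraph.Walk.support_cons, List.mem_cons] at hfs
        push_neg at hfs
        have hfW' : f ∉ W := fun hc => hfW (Finset.mem_erase.2 ⟨hfs.1, hc⟩)
        exact hinv f hfW' hfs.2 w (Finset.mem_of_mem_erase hw)
      · rw [hset]; exact hF
    · -- no neighbor of v in W: pop or restart
      push_neg at hnb
      have hvnb : ∀ w ∈ W, ¬ G.Adj v w := fun w hw hc => hnb w hw hc.symm
      have hvW : v ∉ W := fun hc => hx v hc p.start_mem_support
      have hvS : v ∈ p.support.toFinset := List.mem_toFinset.2 p.start_mem_support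
      have hvF : v ∉ (Finset.univ \ W) \ p.support.toFinset := by
        simp [Finset.mem_sdiff, hvS]
      have hFWdisj : Disjoint ((Finset.univ \ W) \ p.support.toFinset) W :=
        Finset.disjoint_of_subset_left Finset.sdiff_subset Finset.sdiff_disjoint
      have hFW : ∀ f ∈ (Finset.univ \ W) \ p.support.toFinset, ∀ w ∈ W, ¬ G.Adj f w := by
        intro f hf w hw
        rw [Finset.mem_sdiff, Finset.mem_sdiff] at hf
        exact hinv f hf.1.2 (fun hc => hf.2 (List.mem_toFinset.2 hc)) w hw
      have hgrow : (insert v ((Finset.univ \ W) \ p.support.toFinset)).card < k :=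
        stmt_15_grow h hFW hvnb hvF hvW hFWdisj hF hWk
      cases p with
      | nil =>
        -- restart from a fresh vertex w ∈ W
        obtain ⟨w, hw⟩ := Finset.card_pos.1 hWpos
        have e1 : (Finset.univ \ W.erase w)
            \ (SimpleGraph.Walk.nil : G.Walk w w).support.toFinset = Finset.univ \ W := by
          simp only [SimpleGraph.Walk.support_nil, List.toFinset_cons, List.toFinset_nil,
            LawfulSingleton.insert_empty_eq]
          rw [sdiff_sdiff, sup_eq_union, Finset.union_comm, ← Finset.insert_eq, Finset.insert_erase hw]
        have e2 : insert v ((Finset.univ \ W)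
            \ (SimpleGraph.Walk.nil : G.Walk v v).support.toFinset) = Finset.univ \ W := by
          simp only [SimpleGraph.Walk.support_nil, List.toFinset_cons, List.toFinset_nil,
            LawfulSingleton.insert_empty_eq]
          rw [← Finset.erase_eq, Finset.insert_erase (Finset.mem_sdiff.2 ⟨Finset.mem_univ v, hvW⟩)]
        apply ih (W.erase w) w w SimpleGraph.Walk.nil
        · rw [Finset.card_erase_of_mem hw]
          simp only [SimpleGraph.Walk.length_nil] at hm ⊢
          omega
        · exact SimpleGraph.Walk.IsPath.nil
        · intro y hy
          simp only [SimpleGraph.Walk.support_nil, List.mem_cons, List.not_mem_nil, or_false]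
          exact Finset.ne_of_mem_erase hy
        · intro f hfW hfs w' hw'
          simp only [SimpleGraph.Walk.support_nil, List.mem_cons, List.not_mem_nil, or_false] at hfs
          have hfW' : f ∉ W := fun hc => hfW (Finset.mem_erase.2 ⟨hfs, hc⟩)
          by_cases hfv : f = v
          · exact hfv ▸ hvnb w' (Finset.mem_of_mem_erase hw')
          · exact hinv f hfW' (by simp [SimpleGraph.Walk.support_nil, hfv]) w'
              (Finset.mem_of_mem_erase hw')
        · rw [e1, ← e2]; exact hgrow
      | cons hadj' q =>
        rename_i v2
        have hvq : v ∉ q.support := ((SimpleGraph.Walk.cons_isPath_iff _ _).mp hp).2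
        have e : (Finset.univ \ W) \ q.support.toFinset
            = insert v ((Finset.univ \ W) \ (SimpleGraph.Walk.cons hadj' q).support.toFinset) := by
          ext a
          simp only [SimpleGraph.Walk.support_cons, List.toFinset_cons, Finset.mem_sdiff,
            Finset.mem_univ, Finset.mem_insert, true_and, List.mem_toFinset, not_or]
          constructor
          · rintro ⟨h1, h2⟩
            by_cases hav : a = v
            · exact Or.inl hav
            · exact Or.inr ⟨h1, hav, h2⟩
          · rintro (rfl | ⟨h1, h2, h3⟩)
            · exact ⟨hvW, hvq⟩
            · exact ⟨h1, h3⟩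
        apply ih W v2 u q
        · simp only [SimpleGraph.Walk.length_cons] at hm
          omega
        · exact ((SimpleGraph.Walk.cons_isPath_iff _ _).1 hp).1
        · intro y hy
          have := hx y hy
          rw [SimpleGraph.Walk.support_cons, List.mem_cons] at this
          push_neg at this
          exact this.2
        · intro f hfW hfs w' hw'
          by_cases hfv : f = v
          · exact hfv ▸ hvnb w' hw'
          · exact hinv f hfW
              (by rw [SimpleGraph.Walk.support_cons, List.mem_cons]; push_neg; exact ⟨hfv, hfs⟩)
              w' hw'
        · rw [e]; exact hgrow

/-- If `G` is a graph on `n` vertices such that between every two disjoint vertex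
subsets of size `k` there is an edge, then `G` contains a path with `n - 2k + 2`
vertices, i.e. of length `n - 2k + 1`. -/
theorem stmt_15 {V : Type*} [Fintype V] [DecidableEq V] (G : SimpleGraph V)
    (n k : ℕ) (hn : Fintype.card V = n) (hk : 0 < k) (h2k : 2 * k ≤ n)
    (h : ∀ A B : Finset V, A.card = k → B.card = k → Disjoint A B →
      ∃ a ∈ A, ∃ b ∈ B, G.Adj a b) :
    ∃ u v : V, ∃ w : G.Walk u v, w.IsPath ∧ n - 2 * k + 1 ≤ w.length := by
  have hpos : 0 < Fintype.card V := by omega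
  obtain ⟨v0⟩ := Fintype.card_pos_iff.1 hpos
  obtain ⟨v', u', q, hq, hlen⟩ := stmt_15_dfs G n k hn hk h2k h (2 * n) (Finset.univ.erase v0)
    v0 v0 SimpleGraph.Walk.nil
    (by rw [Finset.card_erase_of_mem (Finset.mem_univ v0), Finset.card_univ, hn]
        simp only [SimpleGraph.Walk.length_nil]; omega)
    SimpleGraph.Walk.IsPath.nil
    (by intro x hxm
        simp only [SimpleGraph.Walk.support_nil, List.mem_cons, List.not_mem_nil, or_false]
        exact Finset.ne_of_mem_erase hxm)
    (by intro f hfW hfs w hw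
        exfalso
        simp only [SimpleGraph.Walk.support_nil, List.mem_cons, List.not_mem_nil, or_false] at hfs
        exact hfW (Finset.mem_erase.2 ⟨hfs, Finset.mem_univ f⟩))
    (by have hsub : (Finset.univ \ Finset.univ.erase v0)
            \ (SimpleGraph.Walk.nil : G.Walk v0 v0).support.toFinset ⊆ ∅ := by
          intro a ha
          rw [Finset.mem_sdiff, Finset.mem_sdiff] at ha
          obtain ⟨⟨-, hae⟩, hns⟩ := ha
          simp only [SimpleGraph.Walk.support_nil, List.toFinset_cons, List.toFinset_nil,
            LawfulSingleton.insert_empty_eq, Finset.mem_singleton] at hns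
          exact absurd (Finset.mem_erase.2 ⟨hns, Finset.mem_univ a⟩) hae
        have hcard := Finset.card_le_card hsub
        rw [Finset.card_empty] at hcard
        omega)
  exact ⟨v', u', q, hq, hlen⟩
end

section
/- Suppose during a DFS exploration of a graph on n vertices, guided by query answers X_1, X_2, ..., the set S of explored vertices reaches size n/3 at some time t while |U| ≤ 1 + ∑_{i=1}^t X_i < n/3. Then the algorithm must have already made at least |S|·|T| ≥ n²/9 queries by time t, i.e., t ≥ n²/9. -/
open Filter

/-- One step of a DFS exploration, recording the set `Q` of queried (ordered) pairs.
A state is `(S, U, Q)`: explored set, stack, queried pairs; the number of queries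
made so far is `Q.card`. -/
inductive DFSPStep (V : Type*) [DecidableEq V] :
    Finset V × List V × Finset (V × V) → Finset V × List V × Finset (V × V) → Prop
  /-- A positively answered query: the new vertex `u` is pushed onto the stack. -/
  | pos (S : Finset V) (v : V) (U : List V) (u : V) (Q : Finset (V × V))
      (hQ : (v, u) ∉ Q) (hS : u ∉ S) (hU : u ∉ v :: U) :
      DFSPStep V (S, v :: U, Q) (S, u :: v :: U, insert (v, u) Q)
  /-- A negatively answered query: only `Q` grows. -/
  | neg (S : Finset V) (v : V) (U : List V) (u : V) (Q : Finset (V × V))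
      (hQ : (v, u) ∉ Q) (hS : u ∉ S) (hU : u ∉ v :: U) :
      DFSPStep V (S, v :: U, Q) (S, v :: U, insert (v, u) Q)
  /-- The top vertex `v` is popped into `S`, once all pairs with unvisited vertices
  have been queried. -/
  | pop (S : Finset V) (v : V) (U : List V) (Q : Finset (V × V))
      (h : ∀ u : V, u ∉ S → u ∉ v :: U → (v, u) ∈ Q) :
      DFSPStep V (S, v :: U, Q) (insert v S, U, Q)
  /-- The stack is empty: an unvisited vertex is pushed "for free". -/
  | start (S : Finset V) (u : V) (Q : Finset (V × V)) (hS : u ∉ S) :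
      DFSPStep V (S, [], Q) (S, [u], Q)

/-- Reachable states of the query-recording DFS. -/
def DFSPReachable (V : Type*) [DecidableEq V] (st : Finset V × List V × Finset (V × V)) :
    Prop :=
  Relation.ReflTransGen (DFSPStep V) (∅, ([] : List V), (∅ : Finset (V × V))) st

lemma dfsp_inv {V : Type*} [DecidableEq V] {st : Finset V × List V × Finset (V × V)}
    (h : DFSPReachable V st) :
    ∀ v ∈ st.1, ∀ u, u ∉ st.1 → u ∉ st.2.1 → (v, u) ∈ st.2.2 := by
  induction h with
  | refl => simp
  | tail _ hstep ih =>
    cases hstep with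
    | pos S v U u Q hQ hS hU =>
      intro w hw x hx1 hx2
      exact Finset.mem_insert_of_mem (ih w hw x hx1 (by simp_all))
    | neg S v U u Q hQ hS hU =>
      intro w hw x hx1 hx2
      exact Finset.mem_insert_of_mem (ih w hw x hx1 hx2)
    | pop S v U Q hall =>
      intro w hw x hx1 hx2
      simp only [Finset.mem_insert] at hw hx1
      push_neg at hx1
      rcases hw with rfl | hw
      · exact hall x hx1.2 (by simp [hx1.1, hx2])
      · exact ih w hw x hx1.2 (by simp [hx1.1, hx2])
    | start S u Q hS =>
      intro w hw x hx1 hx2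
      exact ih w hw x hx1 (by simp)

/-- If during a DFS exploration of a graph on `n` vertices the explored set `S` reaches
size `n/3` while the stack `U` has fewer than `n/3` vertices, then all `|S|·|T| ≥ n²/9`
pairs between `S` and `T` have been queried, so at least `n²/9` queries have been made. -/
theorem stmt_16 {n : ℕ} (S : Finset (Fin n)) (U : List (Fin n)) (Q : Finset (Fin n × Fin n))
    (h : DFSPReachable (Fin n) (S, U, Q))
    (hS : (S.card : ℝ) = n / 3) (hU : (U.length : ℝ) < n / 3) :
    S.card * ((S ∪ U.toFinset)ᶜ).card ≤ Q.card ∧ (n : ℝ) ^ 2 / 9 ≤ (Q.card : ℝ) := by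
  have inv := dfsp_inv h
  simp only at inv
  have hsub : S ×ˢ ((S ∪ U.toFinset)ᶜ) ⊆ Q := by
    intro p hp
    simp only [Finset.mem_product, Finset.mem_compl, Finset.mem_union, List.mem_toFinset,
      not_or] at hp
    exact inv p.1 hp.1 p.2 hp.2.1 hp.2.2
  have hcard : S.card * ((S ∪ U.toFinset)ᶜ).card ≤ Q.card := by
    have := Finset.card_le_card hsub
    rwa [Finset.card_product] at this
  refine ⟨hcard, ?_⟩
  have hT : (n : ℝ) - S.card - U.length ≤ (((S ∪ U.toFinset)ᶜ).card : ℝ) := by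
    have h1 : ((S ∪ U.toFinset)ᶜ).card = n - (S ∪ U.toFinset).card := by
      rw [Finset.card_compl, Fintype.card_fin]
    have h2 : (S ∪ U.toFinset).card ≤ S.card + U.length :=
      le_trans (Finset.card_union_le _ _) (by gcongr; exact U.toFinset_card_le)
    have h3 : (S ∪ U.toFinset).card ≤ n := le_trans (Finset.card_le_univ _) (by simp)
    have h2' : ((S ∪ U.toFinset).card : ℝ) ≤ (S.card : ℝ) + U.length := by exact_mod_cast h2
    rw [h1]
    push_cast [Nat.cast_sub h3]
    linarith
  have hn3 : (n : ℝ) / 3 ≤ (((S ∪ U.toFinset)ᶜ).card : ℝ) := by linarith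
  have : (n : ℝ) / 3 * ((n : ℝ) / 3) ≤ (S.card : ℝ) * ((S ∪ U.toFinset)ᶜ).card := by
    rw [hS]; exact mul_le_mul_of_nonneg_left hn3 (by positivity)
  calc (n : ℝ) ^ 2 / 9 = (n : ℝ) / 3 * ((n : ℝ) / 3) := by ring
    _ ≤ (S.card : ℝ) * ((S ∪ U.toFinset)ᶜ).card := this
    _ ≤ (Q.card : ℝ) := by exact_mod_cast hcard
end
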